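/- D-identity of the pseudospectral update rule: with the notation of the pseudospectral discretization (F the n×n normalized DFT matrix; d ∈ ℂⁿ with every d_s nonzero and purely imaginary; D = diag(d); α ∈ ℝ; H = Id − α·D²; B_k = F·I_k·F⁻¹·D; U^♭ the flat of U), define D_{ijp} = Tr(B_i^♭·B_j*·B_p*). Then for every X ∈ ℂⁿ and every index p, Σ_{i,j} X_i·conj(X_j)·D_{ijp} = (1/n)·conj( (F⁻¹·D·F·(X ⋆ (F⁻¹·H·F·conj(X))))_p ), where (x ⋆ y)_s = x_s·y_s denotes the entrywise product of vectors. -/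

import Mathlib

open Matrix Finset

lemma dft_orth (n : ℕ) (hn : 0 < n) (F : Matrix (Fin n) (Fin n) ℂ)
    (hF : ∀ j k : Fin n, F j k =
      (Real.sqrt n : ℂ)⁻¹ *
        Complex.exp (2 * Real.pi * Complex.I * (j : ℕ) * (k : ℕ) / n))
    (a b : Fin n) :
    ∑ s, F a s * (starRingEnd ℂ) (F b s) = if a = b then 1 else 0 := by
  have hn0 : (n : ℂ) ≠ 0 := Nat.cast_ne_zero.mpr hn.ne'
  have hN : ((Real.sqrt n : ℂ))⁻¹ * ((Real.sqrt n : ℂ))⁻¹ = (n : ℂ)⁻¹ := by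
    rw [← mul_inv, ← Complex.ofReal_mul, Real.mul_self_sqrt (Nat.cast_nonneg n),
      Complex.ofReal_natCast]
  set m : ℤ := (a : ℕ) - (b : ℕ) with hm
  set w : ℂ := Complex.exp (2 * Real.pi * Complex.I * m / n) with hw
  have hterm : ∀ s : Fin n, F a s * (starRingEnd ℂ) (F b s) = (n : ℂ)⁻¹ * w ^ (s : ℕ) := by
    intro s
    rw [hF, hF]
    simp only [_root_.map_mul, map_inv₀, Complex.conj_ofReal, ← Complex.exp_conj, map_div₀,
      Complex.conj_I, Complex.conj_natCast, Complex.conj_ofNat]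
    rw [hw, ← Complex.exp_nat_mul, mul_mul_mul_comm, hN, ← Complex.exp_add]
    congr 1
    field_simp
    push_cast [hm]
    ring
  rw [Finset.sum_congr rfl (fun s _ => hterm s), ← Finset.mul_sum]
  by_cases hab : a = b
  · subst hab
    have : w = 1 := by rw [hw, hm]; simp
    simp [this, Finset.card_univ, hn0]
  · rw [if_neg hab]
    have hwn : w ^ n = 1 := by
      rw [hw, ← Complex.exp_nat_mul]
      have : (n : ℂ) * (2 * Real.pi * Complex.I * m / n) = m * (2 * Real.pi * Complex.I) := by
        field_simp
      rw [this, Complex.exp_int_mul_two_pi_mul_I]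
    have hw1 : w ≠ 1 := by
      rw [hw, Ne, Complex.exp_eq_one_iff]
      rintro ⟨k, hk⟩
      have h2 : (2 * (Real.pi:ℂ) * Complex.I) ≠ 0 := by
        simp [Real.pi_ne_zero, Complex.I_ne_zero, Complex.ofReal_ne_zero]
      have hmc : (m : ℂ) = k * n := by
        field_simp at hk
        exact mul_left_cancel₀ h2 (by linear_combination (2 * (Real.pi:ℂ) * Complex.I) * hk)
      have hmk : m = k * n := by exact_mod_cast hmc
      have hmne : m ≠ 0 := by
        simp only [hm, sub_ne_zero]
        exact_mod_cast fun h => hab (Fin.val_injective h)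
      have hma : |m| < n := by
        rw [hm, abs_sub_lt_iff]
        have := a.isLt; have := b.isLt
        constructor <;> push_cast <;> omega
      have hk0 : k ≠ 0 := by rintro rfl; simp at hmk; exact hmne hmk
      have : (n:ℤ) ≤ |m| := by
        rw [hmk, abs_mul, Int.abs_natCast]
        nlinarith [Int.one_le_abs hk0]
      omega
    rw [Fin.sum_univ_eq_sum_range (fun i => w ^ i), geom_sum_eq hw1, hwn]
    simp


/-- D-identity of the pseudospectral update rule: with `F` the normalized DFT
matrix, `D = diag(d)` (entries nonzero and purely imaginary), `H = Id − α·D²`,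
`B_k = F·I_k·F⁻¹·D`, `U^♭` the flat of `U` and
`D_{ijp} = Tr(B_i^♭·B_j*·B_p*)`, one has
`Σ_{i,j} X_i·conj(X_j)·D_{ijp}
  = (1/n)·conj((F⁻¹·D·F·(X ⋆ (F⁻¹·H·F·conj(X))))_p)`,
where `⋆` denotes the entrywise product. -/
theorem pseudospectral_D_identity (n : ℕ) (hn : 0 < n)
    (F : Matrix (Fin n) (Fin n) ℂ)
    (hF : ∀ j k : Fin n, F j k =
      (Real.sqrt n : ℂ)⁻¹ *
        Complex.exp (2 * Real.pi * Complex.I * (j : ℕ) * (k : ℕ) / n))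
    (d : Fin n → ℂ) (hd0 : ∀ s, d s ≠ 0)
    (hdim : ∀ s, (starRingEnd ℂ) (d s) = -d s)
    (α : ℝ)
    (D H : Matrix (Fin n) (Fin n) ℂ)
    (hD : D = Matrix.diagonal d)
    (hH : H = 1 - (α : ℂ) • D ^ 2)
    (B : Fin n → Matrix (Fin n) (Fin n) ℂ)
    (hB : ∀ k, B k =
      F * Matrix.diagonal (fun i => if i = k then (1 : ℂ) else 0) * F⁻¹ * D)
    (flat : Matrix (Fin n) (Fin n) ℂ → Matrix (Fin n) (Fin n) ℂ)
    (hflat : ∀ (U : Matrix (Fin n) (Fin n) ℂ) (i s : Fin n),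
      flat U i s =
        if i = (⟨0, hn⟩ : Fin n) then
          U ⟨0, hn⟩ s * ((α : ℂ) - ((d s) ^ 2)⁻¹)
        else 0)
    (Dcoef : Fin n → Fin n → Fin n → ℂ)
    (hDcoef : ∀ i j p,
      Dcoef i j p = Matrix.trace (flat (B i) * (B j)ᴴ * (B p)ᴴ))
    (X : Fin n → ℂ) (p : Fin n) :
    ∑ i, ∑ j, X i * (starRingEnd ℂ) (X j) * Dcoef i j p =
      (n : ℂ)⁻¹ *
        (starRingEnd ℂ)
          (((F⁻¹ * D * F) *ᵥ
              (fun s => X s *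
                ((F⁻¹ * H * F) *ᵥ (fun r => (starRingEnd ℂ) (X r))) s)) p) := by
  have hsym : ∀ a b : Fin n, F a b = F b a := by
    intro a b; rw [hF, hF]; ring_nf
  have hFinv : F⁻¹ = F.map (starRingEnd ℂ) := by
    apply Matrix.inv_eq_right_inv
    ext a b
    rw [Matrix.mul_apply, Matrix.one_apply, ← dft_orth n hn F hF a b]
    exact Finset.sum_congr rfl fun s _ => by rw [Matrix.map_apply, hsym s b]
  have hBe : ∀ k a c, B k a c = F a k * (starRingEnd ℂ) (F k c) * d c := by
    intro k a c
    rw [hB, hD, hFinv, Matrix.mul_diagonal]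
    congr 1
    rw [Matrix.mul_apply]
    simp only [Matrix.mul_diagonal, Matrix.map_apply, mul_ite, ite_mul, mul_one, mul_zero,
      zero_mul, one_mul]
    simp [Finset.sum_ite_eq, Finset.sum_ite_eq']
  have hH' : H = Matrix.diagonal (fun w => 1 - (α:ℂ) * d w ^ 2) := by
    rw [hH, hD, pow_two, Matrix.diagonal_mul_diagonal]
    ext i j
    by_cases h : i = j <;>
      simp [Matrix.diagonal_apply, Matrix.one_apply, h, pow_two, Matrix.sub_apply]
  have hN : ((Real.sqrt n : ℂ))⁻¹ * ((Real.sqrt n : ℂ))⁻¹ = (n : ℂ)⁻¹ := by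
    rw [← mul_inv, ← Complex.ofReal_mul, Real.mul_self_sqrt (Nat.cast_nonneg n),
      Complex.ofReal_natCast]
  have hFz : ∀ k : Fin n, F (⟨0, hn⟩ : Fin n) k = ((Real.sqrt n : ℂ))⁻¹ := by
    intro k; rw [hF]; norm_num
  have hDc : ∀ i j, Dcoef i j p =
      ∑ s, ∑ t, (n:ℂ)⁻¹ * ((starRingEnd ℂ) (F i s) * (1 - (α:ℂ) * d s ^ 2)) *
        ((starRingEnd ℂ) (F t j) * F j s) * (F p t * (-(d t))) := by
    intro i j
    rw [hDcoef, Matrix.trace]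
    rw [show (flat (B i) * (B j)ᴴ * (B p)ᴴ).diag
        = fun a => ∑ t, (∑ s, flat (B i) a s * (starRingEnd ℂ) (B j t s)) *
            (starRingEnd ℂ) (B p a t) from
      funext fun a => by simp [Matrix.diag, Matrix.mul_apply, Matrix.conjTranspose_apply]]
    rw [Finset.sum_eq_single (⟨0, hn⟩ : Fin n)
      (fun b _ hb => by simp [hflat, hb])
      (fun h => absurd (Finset.mem_univ _) h)]
    simp only [Finset.sum_mul]
    rw [Finset.sum_comm]
    refine Finset.sum_congr rfl fun s _ => Finset.sum_congr rfl fun t _ => ?_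
    rw [hflat, if_pos rfl, hBe, hBe, hBe, hFz, hFz]
    simp only [_root_.map_mul, map_inv₀, Complex.conj_ofReal, hdim, Complex.conj_conj]
    rw [← hN]
    have h2 : (d s)⁻¹ ^ 2 * d s ^ 2 = 1 := by
      rw [← mul_pow, inv_mul_cancel₀ (hd0 s), one_pow]
    field_simp
    linear_combination (-((starRingEnd ℂ) (F i s) * (starRingEnd ℂ) (F t j) * F j s * F p t *
      d t * ((Real.sqrt n : ℝ) : ℂ)⁻¹ ^ 2)) * h2
  have hMD : ∀ a b, (F⁻¹ * D * F) a b = ∑ u, (starRingEnd ℂ) (F a u) * d u * F u b := by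
    intro a b
    rw [hFinv, hD, Matrix.mul_apply]
    exact Finset.sum_congr rfl fun u _ => by rw [Matrix.mul_diagonal, Matrix.map_apply]
  have hMH : ∀ a b, (F⁻¹ * H * F) a b
      = ∑ u, (starRingEnd ℂ) (F a u) * (1 - (α:ℂ) * d u ^ 2) * F u b := by
    intro a b
    rw [hFinv, hH', Matrix.mul_apply]
    exact Finset.sum_congr rfl fun u _ => by rw [Matrix.mul_diagonal, Matrix.map_apply]
  have hhc : ∀ u, (starRingEnd ℂ) (1 - (α:ℂ) * d u ^ 2) = 1 - (α:ℂ) * d u ^ 2 := by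
    intro u
    simp [map_sub, _root_.map_mul, map_pow, hdim, Complex.conj_ofReal]
  simp only [hDc, Finset.mul_sum, Matrix.mulVec, dotProduct, hMD, hMH, Finset.sum_mul,
    map_sum, _root_.map_mul, Complex.conj_conj, hdim, hhc, Complex.conj_ofReal]
  rw [Finset.sum_comm]
  refine Finset.sum_congr rfl fun a _ => Finset.sum_congr rfl fun b _ =>
    Finset.sum_congr rfl fun c _ => Finset.sum_congr rfl fun e _ => ?_
  rw [hsym b c]
  ring
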